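/- If r ≥ |μ|, p > 0, bar K is differentiable at p, and bar K'(p) = r, then ubar Λ_r = bar Λ_p, i.e. the set of directions minimizing I on the circle of radius r coincides with the set of directions maximizing K on the circle of radius p. -/

import Mathlib

open MeasureTheory Set Filter
open scoped ENNReal NNReal RealInnerProductSpace Topology

noncomputable section

/-- The plane `ℝ²`. -/
abbrev E2 : Type := EuclideanSpace ℝ (Fin 2)

/-- The Laplace transform `𝓛(u) = 𝔼 e^{u·X₁}` of the random vector `X1`. -/
def lapT {Ω : Type*} [MeasurableSpace Ω] (P : Measure Ω) (X1 : Ω → E2) (u : E2) : ℝ :=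
  ∫ ω, Real.exp ⟪u, X1 ω⟫ ∂P

/-- The cumulant generating function `K(u) = log 𝓛(u)`. -/
def cgfT {Ω : Type*} [MeasurableSpace Ω] (P : Measure Ω) (X1 : Ω → E2) (u : E2) : ℝ :=
  Real.log (lapT P X1 u)

/-- The rate function `I = K*`, the Legendre–Fenchel conjugate of `K`.
Since `I ≥ 0` (the value `0 = 0·v - K(0)` is always attained in the supremum),
we may record it as an `ℝ≥0∞`-valued supremum, clamping negatives to `0`. -/
def rateI {Ω : Type*} [MeasurableSpace Ω] (P : Measure Ω) (X1 : Ω → E2) (v : E2) : ℝ≥0∞ :=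
  ⨆ u : E2, ENNReal.ofReal (⟪u, v⟫ - cgfT P X1 u)

/-- The radial minimum function `ubar I (r) = inf_{|ℓ|=1} I(rℓ)`, `+∞` for `r < 0`. -/
def radMin {Ω : Type*} [MeasurableSpace Ω] (P : Measure Ω) (X1 : Ω → E2) (r : ℝ) : ℝ≥0∞ :=
  if r < 0 then ⊤ else ⨅ ℓ ∈ {ℓ : E2 | ‖ℓ‖ = 1}, rateI P X1 (r • ℓ)

/-- The set of minimal directions `ubar Λ_r = argmin_{|ℓ|=1} I(rℓ)`. -/
def minDirs {Ω : Type*} [MeasurableSpace Ω] (P : Measure Ω) (X1 : Ω → E2) (r : ℝ) : Set E2 :=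
  {ℓ : E2 | ‖ℓ‖ = 1 ∧ ∀ ℓ' : E2, ‖ℓ'‖ = 1 → rateI P X1 (r • ℓ) ≤ rateI P X1 (r • ℓ')}

/-- The topological support of a measure on `ℝ²`: the points all of whose open
neighbourhoods have positive measure. -/
def msupp (ν : Measure E2) : Set E2 := {x | ∀ U : Set E2, IsOpen U → x ∈ U → 0 < ν U}

/-- The mean `μ = 𝔼 X₁`. -/
def meanv {Ω : Type*} [MeasurableSpace Ω] (P : Measure Ω) (X1 : Ω → E2) : E2 :=
  ∫ ω, X1 ω ∂P

/-- `r_min = min { |x| : x ∈ conv (supp X₁) }`. -/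
def rmin {Ω : Type*} [MeasurableSpace Ω] (P : Measure Ω) (X1 : Ω → E2) : ℝ :=
  sInf (norm '' (convexHull ℝ (msupp (P.map X1))))

/-- `r_max = max { |x| : x ∈ supp X₁ }`, as an element of `[0,∞]` (possibly `∞`). -/
def rmaxE {Ω : Type*} [MeasurableSpace Ω] (P : Measure Ω) (X1 : Ω → E2) : ℝ≥0∞ :=
  ⨆ y ∈ msupp (P.map X1), (‖y‖₊ : ℝ≥0∞)

/-- Convexity of an `[0,∞]`-valued function on a subset of `ℝ`. -/
def ENNConvexOn (s : Set ℝ) (g : ℝ → ℝ≥0∞) : Prop :=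
  ∀ ⦃x⦄, x ∈ s → ∀ ⦃y⦄, y ∈ s → ∀ a b : ℝ≥0, a + b = 1 →
    g ((a : ℝ) * x + (b : ℝ) * y) ≤ (a : ℝ≥0∞) * g x + (b : ℝ≥0∞) * g y

/-- The largest convex minorant of an `[0,∞]`-valued function on `ℝ`. -/
def convMin (g : ℝ → ℝ≥0∞) (x : ℝ) : ℝ≥0∞ :=
  ⨆ h ∈ {h : ℝ → ℝ≥0∞ | ENNConvexOn Set.univ h ∧ ∀ y, h y ≤ g y}, h x

/-- The radial maximum `bar K(p) = max_{|ℓ|=1} K(pℓ)` of the cumulant generating function. -/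
def barK {Ω : Type*} [MeasurableSpace Ω] (P : Measure Ω) (X1 : Ω → E2) (p : ℝ) : ℝ :=
  sSup ((fun ℓ : E2 => cgfT P X1 (p • ℓ)) '' {ℓ : E2 | ‖ℓ‖ = 1})

/-- The radial maximum `bar 𝓛(p) = max_{|ℓ|=1} 𝓛(pℓ)` of the Laplace transform. -/
def barL {Ω : Type*} [MeasurableSpace Ω] (P : Measure Ω) (X1 : Ω → E2) (p : ℝ) : ℝ :=
  sSup ((fun ℓ : E2 => lapT P X1 (p • ℓ)) '' {ℓ : E2 | ‖ℓ‖ = 1})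

/-- The set of maximal directions `bar Λ_p = argmax_{|ℓ|=1} K(pℓ)`. -/
def maxDirs {Ω : Type*} [MeasurableSpace Ω] (P : Measure Ω) (X1 : Ω → E2) (p : ℝ) :
    Set E2 :=
  {ℓ : E2 | ‖ℓ‖ = 1 ∧ ∀ ℓ' : E2, ‖ℓ'‖ = 1 → cgfT P X1 (p • ℓ') ≤ cgfT P X1 (p • ℓ)}

section Helpers

variable {Ω : Type*} [MeasurableSpace Ω] (P : Measure Ω) [IsProbabilityMeasure P]
  (X1 : Ω → E2) (hX : Measurable X1)
  (hLap : ∀ u : E2, Integrable (fun ω => Real.exp ⟪u, X1 ω⟫) P)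

include hLap in
lemma lapT_pos (u : E2) : 0 < lapT P X1 u := by
  rw [lapT, integral_pos_iff_support_of_nonneg (fun ω => (Real.exp_pos _).le) (hLap u)]
  have : Function.support (fun ω => Real.exp ⟪u, X1 ω⟫) = Set.univ := by
    ext ω; simp [Function.mem_support, (Real.exp_pos _).ne']
  rw [this]; simp

lemma cgfT_zero : cgfT P X1 0 = 0 := by
  simp [cgfT, lapT]

end Helpers
section Conv

set_option linter.unusedSectionVars false

variable {Ω : Type*} [MeasurableSpace Ω] (P : Measure Ω) [IsProbabilityMeasure P]
  (X1 : Ω → E2) (hX : Measurable X1)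
  (hLap : ∀ u : E2, Integrable (fun ω => Real.exp ⟪u, X1 ω⟫) P)

include hX in
lemma aemeas_exp (u : E2) :
    AEMeasurable (fun ω => ENNReal.ofReal (Real.exp ⟪u, X1 ω⟫)) P := by
  exact (ENNReal.measurable_ofReal.comp (Real.measurable_exp.comp
    ((measurable_const.inner hX)))).aemeasurable

include hLap in
lemma lintegral_exp_eq (u : E2) :
    ∫⁻ ω, ENNReal.ofReal (Real.exp ⟪u, X1 ω⟫) ∂P = ENNReal.ofReal (lapT P X1 u) :=
  (ofReal_integral_eq_lintegral_ofReal (hLap u)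
    (Filter.Eventually.of_forall fun ω => (Real.exp_pos _).le)).symm

include hX hLap in
lemma cgfT_convex : ConvexOn ℝ Set.univ (cgfT P X1) := by
  refine ⟨convex_univ, ?_⟩
  intro u _ v _ a b ha hb hab
  rcases eq_or_lt_of_le ha with ha0 | ha0
  · have hb1 : b = 1 := by linarith
    simp [← ha0, hb1]
  rcases eq_or_lt_of_le hb with hb0 | hb0
  · have ha1 : a = 1 := by linarith
    simp [← hb0, ha1]
  have hpq : Real.HolderConjugate (1/a) (1/b) := by
    refine Real.holderConjugate_iff.mpr ⟨?_, ?_⟩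
    · rw [lt_div_iff₀ ha0]; linarith
    · simp only [one_div, inv_inv]; exact hab
  have hpt : ∀ x : E2, ENNReal.ofReal (Real.exp ⟪a • u + b • v, x⟫)
      = (ENNReal.ofReal (Real.exp ⟪u, x⟫)) ^ a * (ENNReal.ofReal (Real.exp ⟪v, x⟫)) ^ b := by
    intro x
    have hre : Real.exp (a * ⟪u,x⟫ + b * ⟪v,x⟫)
        = (Real.exp ⟪u,x⟫) ^ a * (Real.exp ⟪v,x⟫) ^ b := by
      rw [Real.exp_add, mul_comm a, mul_comm b, Real.exp_mul, Real.exp_mul]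
    rw [inner_add_left, real_inner_smul_left, real_inner_smul_left, hre,
      ENNReal.ofReal_mul (by positivity), ENNReal.ofReal_rpow_of_pos (Real.exp_pos _),
      ENNReal.ofReal_rpow_of_pos (Real.exp_pos _)]
  have hH : ENNReal.ofReal (lapT P X1 (a • u + b • v))
      ≤ (ENNReal.ofReal (lapT P X1 u)) ^ a * (ENNReal.ofReal (lapT P X1 v)) ^ b := by
    rw [← lintegral_exp_eq P X1 hLap, ← lintegral_exp_eq P X1 hLap,
      ← lintegral_exp_eq P X1 hLap]
    have := ENNReal.lintegral_mul_le_Lp_mul_Lq P hpq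
      (f := fun ω => (ENNReal.ofReal (Real.exp ⟪u, X1 ω⟫)) ^ a)
      (g := fun ω => (ENNReal.ofReal (Real.exp ⟪v, X1 ω⟫)) ^ b)
      ((aemeas_exp P X1 hX u).pow_const _) ((aemeas_exp P X1 hX v).pow_const _)
    simp only [Pi.mul_apply] at this
    calc ∫⁻ ω, ENNReal.ofReal (Real.exp ⟪a • u + b • v, X1 ω⟫) ∂P
        = ∫⁻ ω, (ENNReal.ofReal (Real.exp ⟪u, X1 ω⟫)) ^ a
            * (ENNReal.ofReal (Real.exp ⟪v, X1 ω⟫)) ^ b ∂P := by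
          simp only [hpt]
      _ ≤ _ := this
      _ = _ := by
          congr 1
          · congr 1
            · refine lintegral_congr fun ω => ?_
              rw [one_div, ENNReal.rpow_rpow_inv ha0.ne']
            · rw [one_div_one_div]
          · congr 1
            · refine lintegral_congr fun ω => ?_
              rw [one_div, ENNReal.rpow_rpow_inv hb0.ne']
            · rw [one_div_one_div]
  -- pass to reals and take logs
  have h1 : lapT P X1 (a • u + b • v) ≤ (lapT P X1 u) ^ a * (lapT P X1 v) ^ b := by
    have := ENNReal.toReal_mono (ENNReal.mul_ne_top (ENNReal.rpow_ne_top_of_nonneg ha0.le ENNReal.ofReal_ne_top) (ENNReal.rpow_ne_top_of_nonneg hb0.le ENNReal.ofReal_ne_top)) hH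
    rwa [ENNReal.toReal_ofReal (lapT_pos P X1 hLap _).le, ENNReal.toReal_mul,
      ← ENNReal.toReal_rpow, ← ENNReal.toReal_rpow,
      ENNReal.toReal_ofReal (lapT_pos P X1 hLap _).le,
      ENNReal.toReal_ofReal (lapT_pos P X1 hLap _).le] at this
  have h2 := Real.log_le_log (lapT_pos P X1 hLap _) h1
  rwa [Real.log_mul (Real.rpow_pos_of_pos (lapT_pos P X1 hLap _) _).ne' (Real.rpow_pos_of_pos (lapT_pos P X1 hLap _) _).ne',
    Real.log_rpow (lapT_pos P X1 hLap _), Real.log_rpow (lapT_pos P X1 hLap _)] at h2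

end Conv
section Cont

set_option linter.unusedSectionVars false

variable {Ω : Type*} [MeasurableSpace Ω] (P : Measure Ω) [IsProbabilityMeasure P]
  (X1 : Ω → E2) (hX : Measurable X1)
  (hLap : ∀ u : E2, Integrable (fun ω => Real.exp ⟪u, X1 ω⟫) P)

/-- corner vector -/
def cor (s t : ℝ) : E2 := EuclideanSpace.single 0 s + EuclideanSpace.single 1 t

lemma inner_cor (s t : ℝ) (x : E2) : ⟪cor s t, x⟫ = s * x 0 + t * x 1 := by
  simp [cor, inner_add_left, EuclideanSpace.inner_single_left]

lemma abs_coord_le (u : E2) (i : Fin 2) : |u i| ≤ ‖u‖ := by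
  have := abs_real_inner_le_norm (EuclideanSpace.single i (1:ℝ)) u
  simpa [EuclideanSpace.inner_single_left] using this

lemma exp_abs_le (y : ℝ) : Real.exp |y| ≤ Real.exp y + Real.exp (-y) := by
  rcases abs_cases y with ⟨h, _⟩ | ⟨h, _⟩ <;> rw [h] <;>
    [linarith [(Real.exp_pos (-y)).le]; linarith [(Real.exp_pos y).le]]

lemma exp_inner_le {R : ℝ} (hR : 0 ≤ R) {u : E2} (hu : ‖u‖ ≤ R) (x : E2) :
    Real.exp ⟪u, x⟫ ≤ (Real.exp (R * x 0) + Real.exp (-(R * x 0)))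
      * (Real.exp (R * x 1) + Real.exp (-(R * x 1))) := by
  have hinner : ⟪u, x⟫ = u 0 * x 0 + u 1 * x 1 := by
    simp [PiLp.inner_apply, Fin.sum_univ_two, mul_comm]
  have key : ∀ i : Fin 2, Real.exp (u i * x i)
      ≤ Real.exp (R * x i) + Real.exp (-(R * x i)) := by
    intro i
    have h1 : u i * x i ≤ |R * x i| := by
      calc u i * x i ≤ |u i * x i| := le_abs_self _
        _ = |u i| * |x i| := abs_mul _ _
        _ ≤ R * |x i| := by
            exact mul_le_mul_of_nonneg_right ((abs_coord_le u i).trans hu) (abs_nonneg _)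
        _ = |R * x i| := by rw [abs_mul, abs_of_nonneg hR]
    calc Real.exp (u i * x i) ≤ Real.exp |R * x i| := Real.exp_le_exp.2 h1
      _ ≤ _ := exp_abs_le _
  rw [hinner, Real.exp_add]
  exact mul_le_mul (key 0) (key 1) (Real.exp_pos _).le
    (by positivity)

include hX hLap in
lemma lapT_continuous : Continuous (lapT P X1) := by
  rw [continuous_iff_continuousAt]
  intro u₀
  set R : ℝ := ‖u₀‖ + 1 with hRdef
  have hR : 0 ≤ R := by positivity
  apply continuousAt_of_dominated (bound := fun ω =>
    (Real.exp (R * X1 ω 0) + Real.exp (-(R * X1 ω 0)))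
      * (Real.exp (R * X1 ω 1) + Real.exp (-(R * X1 ω 1))))
  · exact Filter.Eventually.of_forall fun u =>
      (Real.measurable_exp.comp (measurable_const.inner hX)).aestronglyMeasurable
  · filter_upwards [Metric.ball_mem_nhds u₀ one_pos] with u hu
    have hun : ‖u‖ ≤ R := by
      have := norm_sub_norm_le u u₀
      have h2 : dist u u₀ < 1 := Metric.mem_ball.1 hu
      rw [dist_eq_norm] at h2
      simp only [hRdef]; linarith
    exact Filter.Eventually.of_forall fun ω => by
      rw [Real.norm_eq_abs, abs_of_pos (Real.exp_pos _)]
      exact exp_inner_le hR hun (X1 ω)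
  · have : (fun ω => (Real.exp (R * X1 ω 0) + Real.exp (-(R * X1 ω 0)))
        * (Real.exp (R * X1 ω 1) + Real.exp (-(R * X1 ω 1)))) = fun ω =>
        Real.exp ⟪cor R R, X1 ω⟫ + Real.exp ⟪cor R (-R), X1 ω⟫
          + Real.exp ⟪cor (-R) R, X1 ω⟫ + Real.exp ⟪cor (-R) (-R), X1 ω⟫ := by
      funext ω
      simp only [inner_cor, Real.exp_add]
      ring
    rw [this]
    exact (((hLap _).add (hLap _)).add (hLap _)).add (hLap _)
  · exact Filter.Eventually.of_forall fun ω =>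
      (Real.continuous_exp.comp (continuous_id.inner continuous_const)).continuousAt

include hX hLap in
lemma cgfT_continuous : Continuous (cgfT P X1) := by
  rw [continuous_iff_continuousAt]
  intro u
  exact (Real.continuousAt_log (lapT_pos P X1 hLap u).ne').comp
    (lapT_continuous P X1 hX hLap).continuousAt

end Cont
section BarK

set_option linter.unusedSectionVars false

variable {Ω : Type*} [MeasurableSpace Ω] (P : Measure Ω) [IsProbabilityMeasure P]
  (X1 : Ω → E2) (hX : Measurable X1)
  (hLap : ∀ u : E2, Integrable (fun ω => Real.exp ⟪u, X1 ω⟫) P)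

lemma sphS_eq : {ℓ : E2 | ‖ℓ‖ = 1} = Metric.sphere (0:E2) 1 := by
  ext ℓ; simp [mem_sphere_zero_iff_norm]

lemma sph_ne : ({ℓ : E2 | ‖ℓ‖ = 1} : Set E2).Nonempty :=
  ⟨EuclideanSpace.single 0 1, by simp [EuclideanSpace.norm_single]⟩

include hX hLap in
lemma barK_img_bdd (p : ℝ) :
    BddAbove ((fun ℓ : E2 => cgfT P X1 (p • ℓ)) '' {ℓ : E2 | ‖ℓ‖ = 1}) := by
  have hc : Continuous fun ℓ : E2 => cgfT P X1 (p • ℓ) :=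
    (cgfT_continuous P X1 hX hLap).comp (continuous_const_smul p)
  rw [sphS_eq]
  exact ((isCompact_sphere (0:E2) 1).image hc).bddAbove

include hX hLap in
lemma le_barK {p : ℝ} {ℓ : E2} (hℓ : ‖ℓ‖ = 1) : cgfT P X1 (p • ℓ) ≤ barK P X1 p :=
  le_csSup (barK_img_bdd P X1 hX hLap p) (Set.mem_image_of_mem _ hℓ)

lemma barK_le_forall {p c : ℝ} (h : ∀ ℓ : E2, ‖ℓ‖ = 1 → cgfT P X1 (p • ℓ) ≤ c) :
    barK P X1 p ≤ c :=
  csSup_le (sph_ne.image _) (by rintro _ ⟨ℓ, hℓ, rfl⟩; exact h ℓ hℓ)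

include hX hLap in
lemma exists_barK_max (p : ℝ) : ∃ ℓ : E2, ‖ℓ‖ = 1 ∧
    ∀ ℓ' : E2, ‖ℓ'‖ = 1 → cgfT P X1 (p • ℓ') ≤ cgfT P X1 (p • ℓ) := by
  have hc : ContinuousOn (fun ℓ : E2 => cgfT P X1 (p • ℓ)) (Metric.sphere (0:E2) 1) :=
    ((cgfT_continuous P X1 hX hLap).comp (continuous_const_smul p)).continuousOn
  obtain ⟨ℓ, hℓ, hmax⟩ := (isCompact_sphere (0:E2) 1).exists_isMaxOn
    ⟨EuclideanSpace.single 0 1, by simp [EuclideanSpace.norm_single]⟩ hc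
  refine ⟨ℓ, mem_sphere_zero_iff_norm.1 hℓ, fun ℓ' hℓ' => hmax (mem_sphere_zero_iff_norm.2 hℓ')⟩

include hX hLap in
lemma barK_eq_of_max {p : ℝ} {ℓ : E2} (hℓ : ‖ℓ‖ = 1)
    (hmax : ∀ ℓ' : E2, ‖ℓ'‖ = 1 → cgfT P X1 (p • ℓ') ≤ cgfT P X1 (p • ℓ)) :
    barK P X1 p = cgfT P X1 (p • ℓ) :=
  le_antisymm (barK_le_forall P X1 hmax) (le_barK P X1 hX hLap hℓ)

include hX hLap in
lemma barK_zero : barK P X1 0 = 0 := by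
  refine le_antisymm (barK_le_forall P X1 fun ℓ hℓ => by
    rw [zero_smul, cgfT_zero]) ?_
  have := le_barK P X1 hX hLap (p := 0) (sph_ne.some_mem)
  rwa [zero_smul, cgfT_zero] at this

include hX hLap in
lemma cgfT_le_barK_norm {v : E2} (hv : v ≠ 0) : cgfT P X1 v ≤ barK P X1 ‖v‖ := by
  have hunit : ‖‖v‖⁻¹ • v‖ = 1 := norm_smul_inv_norm hv
  have h := le_barK P X1 hX hLap (p := ‖v‖) hunit
  rwa [smul_smul, mul_inv_cancel₀ (norm_ne_zero_iff.2 hv), one_smul] at h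

include hX hLap in
lemma barK_convex : ConvexOn ℝ Set.univ (barK P X1) := by
  refine ⟨convex_univ, fun q₁ _ q₂ _ a b ha hb hab => ?_⟩
  simp only [smul_eq_mul]
  apply barK_le_forall
  intro ℓ hℓ
  have hsm : (a * q₁ + b * q₂) • ℓ = a • (q₁ • ℓ) + b • (q₂ • ℓ) := by
    rw [add_smul, smul_smul, smul_smul]
  rw [hsm]
  calc cgfT P X1 (a • (q₁ • ℓ) + b • (q₂ • ℓ))
      ≤ a * cgfT P X1 (q₁ • ℓ) + b * cgfT P X1 (q₂ • ℓ) :=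
        (cgfT_convex P X1 hX hLap).2 (Set.mem_univ _) (Set.mem_univ _) ha hb hab
    _ ≤ a * barK P X1 q₁ + b * barK P X1 q₂ :=
        add_le_add (mul_le_mul_of_nonneg_left (le_barK P X1 hX hLap hℓ) ha)
          (mul_le_mul_of_nonneg_left (le_barK P X1 hX hLap hℓ) hb)

include hX hLap in
lemma barK_le_mul {p r : ℝ} (hp : 0 < p) (hderiv : HasDerivAt (barK P X1) r p) :
    barK P X1 p ≤ p * r := by
  have hcv := barK_convex P X1 hX hLap
  have hslope : Tendsto (slope (barK P X1) p) (𝓝[>] p) (𝓝 r) :=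
    (hasDerivAt_iff_tendsto_slope.1 hderiv).mono_left
      (nhdsWithin_mono _ fun x hx => ne_of_gt hx)
  have hev : ∀ᶠ x in 𝓝[>] p, barK P X1 p / p ≤ slope (barK P X1) p x := by
    filter_upwards [self_mem_nhdsWithin] with x hx
    have := hcv.slope_mono_adjacent (Set.mem_univ 0) (Set.mem_univ x) hp hx
    rw [barK_zero P X1 hX hLap] at this
    rw [slope_def_field]
    simpa [sub_zero] using this
  have := ge_of_tendsto hslope hev
  rwa [div_le_iff₀ hp, mul_comm] at this

end BarK
section Key

set_option linter.unusedSectionVars false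

variable {Ω : Type*} [MeasurableSpace Ω] (P : Measure Ω) [IsProbabilityMeasure P]
  (X1 : Ω → E2) (hX : Measurable X1)
  (hLap : ∀ u : E2, Integrable (fun ω => Real.exp ⟪u, X1 ω⟫) P)

include hX hLap in
/-- For a maximizing direction `ℓ`, `rℓ` is a subgradient of `K` at `pℓ`. -/
lemma subgrad {p r : ℝ} (hp : 0 < p) (hderiv : HasDerivAt (barK P X1) r p)
    {ℓ : E2} (hℓ : ‖ℓ‖ = 1)
    (hmax : ∀ ℓ' : E2, ‖ℓ'‖ = 1 → cgfT P X1 (p • ℓ') ≤ cgfT P X1 (p • ℓ)) (u : E2) :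
    cgfT P X1 (p • ℓ) + r * (⟪u, ℓ⟫ - p) ≤ cgfT P X1 u := by
  by_contra hcon
  push_neg at hcon
  set c : ℝ := ⟪u, ℓ⟫ with hc
  set ε : ℝ := cgfT P X1 (p • ℓ) + r * (c - p) - cgfT P X1 u with hεdef
  have hε0 : 0 < ε := by simp only [hεdef]; linarith
  set w : E2 := u - p • ℓ with hw
  have hinner_lw : ⟪ℓ, w⟫ = c - p := by
    rw [hw, inner_sub_right, real_inner_smul_right, real_inner_self_eq_norm_sq, hℓ,
      real_inner_comm, ← hc]
    ring
  set q : ℝ → ℝ := fun t => Real.sqrt (p^2 - 2*p*(c-p)*t + ‖w‖^2*t^2) with hqdef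
  have hq0 : q 0 = p := by
    show Real.sqrt _ = p
    rw [show p^2 - 2*p*(c-p)*0 + ‖w‖^2*0^2 = p^2 by ring, Real.sqrt_sq hp.le]
  -- derivative of the inner polynomial
  have hg : HasDerivAt (fun t : ℝ => p^2 - 2*p*(c-p)*t + ‖w‖^2*t^2) (-(2*p*(c-p))) 0 := by
    have h1 : HasDerivAt (fun t : ℝ => p^2 - 2*p*(c-p)*t + ‖w‖^2*t^2)
        (0 - 2*p*(c-p)*1 + ‖w‖^2*(2*0^1)) 0 := by
      exact ((hasDerivAt_const 0 (p^2)).sub (((hasDerivAt_id (0:ℝ))).const_mul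
        (2*p*(c-p)))).add ((hasDerivAt_pow 2 (0:ℝ)).const_mul (‖w‖^2))
    convert h1 using 1
    ring
  have hsq : HasDerivAt Real.sqrt (1/(2*Real.sqrt (p^2)))
      (p ^ 2 - 2*p*(c-p)*0 + ‖w‖^2*0^2) := by
    rw [show p^2 - 2*p*(c-p)*0 + ‖w‖^2*0^2 = p^2 by ring]
    exact Real.hasDerivAt_sqrt (by positivity)
  have hq : HasDerivAt q (-(c-p)) 0 := by
    have h2 := hsq.comp 0 hg
    have hval : 1/(2*Real.sqrt (p^2)) * -(2*p*(c-p)) = -(c-p) := by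
      rw [Real.sqrt_sq hp.le]
      field_simp
    rw [hval] at h2
    exact h2
  have hbq : HasDerivAt (fun t => barK P X1 (q t)) (r * (-(c-p))) 0 := by
    have hd : HasDerivAt (barK P X1) r (q 0) := hq0 ▸ hderiv
    exact hd.comp 0 hq
  have hslope : Tendsto (slope (fun t => barK P X1 (q t)) 0) (𝓝[>] (0:ℝ)) (𝓝 (r * (-(c-p)))) :=
    (hasDerivAt_iff_tendsto_slope.1 hbq).mono_left
      (nhdsWithin_mono _ fun x hx => ne_of_gt hx)
  have hqpos : ∀ᶠ t in 𝓝[>] (0:ℝ), 0 < q t := by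
    have hcont : Tendsto q (𝓝 0) (𝓝 p) := by
      have := hq.continuousAt
      rwa [ContinuousAt, hq0] at this
    exact (hcont.eventually (eventually_gt_nhds hp)).filter_mono nhdsWithin_le_nhds
  have hev : ∀ᶠ t in 𝓝[>] (0:ℝ), ε - r * (c - p) ≤ slope (fun t => barK P X1 (q t)) 0 t := by
    filter_upwards [hqpos, self_mem_nhdsWithin] with t hqt ht
    have ht0 : 0 < t := ht
    set v : E2 := p • ℓ - t • w with hv
    have hnv : ‖v‖ = q t := by
      rw [hv, hqdef]
      rw [@norm_eq_sqrt_real_inner]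
      congr 1
      rw [real_inner_sub_sub_self, real_inner_smul_left, real_inner_smul_right,
        real_inner_self_eq_norm_sq, hℓ, real_inner_smul_left, real_inner_smul_right,
        hinner_lw, real_inner_smul_left, real_inner_smul_right, real_inner_self_eq_norm_sq]
      ring
    have hvne : v ≠ 0 := by
      intro h0
      rw [h0, norm_zero] at hnv
      exact hqt.ne' hnv.symm
    have hKv_le : cgfT P X1 v ≤ barK P X1 (q t) := by
      have := cgfT_le_barK_norm P X1 hX hLap hvne
      rwa [hnv] at this
    -- convexity step
    have h1t : (0:ℝ) < 1 + t := by linarith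
    have hcomb : (t/(1+t)) • u + (1/(1+t)) • v = p • ℓ := by
      rw [hv, hw]
      match_scalars <;> field_simp <;> ring
    have hconv : cgfT P X1 (p • ℓ)
        ≤ (t/(1+t)) * cgfT P X1 u + (1/(1+t)) * cgfT P X1 v := by
      have := (cgfT_convex P X1 hX hLap).2 (Set.mem_univ u) (Set.mem_univ v)
        (by positivity : (0:ℝ) ≤ t/(1+t)) (by positivity : (0:ℝ) ≤ 1/(1+t))
        (by field_simp; ring)
      simp only [smul_eq_mul] at this
      rwa [hcomb] at this
    have hKvlb : (1+t) * cgfT P X1 (p • ℓ) ≤ t * cgfT P X1 u + cgfT P X1 v := by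
      have h2 := mul_le_mul_of_nonneg_left hconv h1t.le
      have h3 : (1+t) * ((t/(1+t)) * cgfT P X1 u + (1/(1+t)) * cgfT P X1 v)
          = t * cgfT P X1 u + cgfT P X1 v := by
        field_simp
      linarith [h2, h3.le]
    -- assemble slope bound
    have hKeq : barK P X1 p = cgfT P X1 (p • ℓ) := barK_eq_of_max P X1 hX hLap hℓ hmax
    rw [slope_def_field, hq0, hKeq, sub_zero, le_div_iff₀ ht0]
    have hKu : cgfT P X1 u = cgfT P X1 (p • ℓ) + r * (c - p) - ε := by
      rw [hεdef]; ring
    calc (ε - r * (c - p)) * t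
        = t * cgfT P X1 u + ((1+t) * cgfT P X1 (p • ℓ) - t * cgfT P X1 u)
          - (1+t) * cgfT P X1 (p•ℓ) + (ε - r*(c-p))*t := by ring
      _ ≤ barK P X1 (q t) - cgfT P X1 (p • ℓ) := by
          rw [hKu]
          nlinarith [hKvlb, hKv_le]
  have hfinal := ge_of_tendsto hslope hev
  nlinarith [hfinal, hε0]

end Key
/-- If `r ≥ |μ|`, `p > 0`, `bar K` is differentiable at `p` with
`bar K'(p) = r`, then `ubar Λ_r = bar Λ_p`: the directions minimizing `I` on the circle of
radius `r` are exactly the directions maximizing `K` on the circle of radius `p`. -/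
theorem minDirs_eq_maxDirs
    {Ω : Type*} [MeasurableSpace Ω] (P : Measure Ω) [IsProbabilityMeasure P]
    (X1 : Ω → E2) (hX : Measurable X1)
    (hLap : ∀ u : E2, Integrable (fun ω => Real.exp ⟪u, X1 ω⟫) P)
    (r p : ℝ) (hr : ‖meanv P X1‖ ≤ r) (hp : 0 < p)
    (hderiv : HasDerivAt (barK P X1) r p) :
    minDirs P X1 r = maxDirs P X1 p := by
  obtain ⟨ℓ₀, hℓ₀, hmax₀⟩ := exists_barK_max P X1 hX hLap p
  have hub : ∀ ℓ : E2, ‖ℓ‖ = 1 →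
      (∀ ℓ' : E2, ‖ℓ'‖ = 1 → cgfT P X1 (p • ℓ') ≤ cgfT P X1 (p • ℓ)) →
      rateI P X1 (r • ℓ) ≤ ENNReal.ofReal (p * r - cgfT P X1 (p • ℓ)) := by
    intro ℓ hℓ hm
    rw [rateI]
    refine iSup_le fun u => ENNReal.ofReal_le_ofReal ?_
    have hsub := subgrad P X1 hX hLap hp hderiv hℓ hm u
    have hir : ⟪u, r • ℓ⟫ = r * ⟪u, ℓ⟫ := real_inner_smul_right u ℓ r
    rw [hir]
    linarith
  have hlb : ∀ ℓ : E2, ‖ℓ‖ = 1 →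
      ENNReal.ofReal (p * r - cgfT P X1 (p • ℓ)) ≤ rateI P X1 (r • ℓ) := by
    intro ℓ hℓ
    have hin : ⟪p • ℓ, r • ℓ⟫ = p * r := by
      rw [real_inner_smul_left, real_inner_smul_right, real_inner_self_eq_norm_sq, hℓ]
      ring
    calc ENNReal.ofReal (p * r - cgfT P X1 (p • ℓ))
        = ENNReal.ofReal (⟪p • ℓ, r • ℓ⟫ - cgfT P X1 (p • ℓ)) := by rw [hin]
      _ ≤ rateI P X1 (r • ℓ) := by
          rw [rateI]
          exact le_iSup (fun u => ENNReal.ofReal (⟪u, r • ℓ⟫ - cgfT P X1 u)) (p • ℓ)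
  have hKpr : barK P X1 p ≤ p * r := barK_le_mul P X1 hX hLap hp hderiv
  have hKeq₀ : barK P X1 p = cgfT P X1 (p • ℓ₀) := barK_eq_of_max P X1 hX hLap hℓ₀ hmax₀
  ext ℓ
  constructor
  · rintro ⟨hℓ, hminℓ⟩
    refine ⟨hℓ, fun ℓ' hℓ' => ?_⟩
    have h1 : rateI P X1 (r • ℓ) ≤ ENNReal.ofReal (p * r - cgfT P X1 (p • ℓ₀)) :=
      (hminℓ ℓ₀ hℓ₀).trans (hub ℓ₀ hℓ₀ hmax₀)
    have h2 := (hlb ℓ hℓ).trans h1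
    have h3 : 0 ≤ p * r - cgfT P X1 (p • ℓ₀) := by rw [← hKeq₀]; linarith
    have h4 : p * r - cgfT P X1 (p • ℓ) ≤ p * r - cgfT P X1 (p • ℓ₀) :=
      (ENNReal.ofReal_le_ofReal_iff h3).1 h2
    have h5 : cgfT P X1 (p • ℓ₀) ≤ cgfT P X1 (p • ℓ) := by linarith
    exact (hmax₀ ℓ' hℓ').trans h5
  · rintro ⟨hℓ, hmaxℓ⟩
    refine ⟨hℓ, fun ℓ' hℓ' => ?_⟩
    calc rateI P X1 (r • ℓ) ≤ ENNReal.ofReal (p * r - cgfT P X1 (p • ℓ)) := hub ℓ hℓ hmaxℓ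
      _ ≤ ENNReal.ofReal (p * r - cgfT P X1 (p • ℓ')) :=
          ENNReal.ofReal_le_ofReal (by linarith [hmaxℓ ℓ' hℓ'])
      _ ≤ rateI P X1 (r • ℓ') := hlb ℓ' hℓ'

end
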